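/- arXiv:1709.08757 — 3 statements merged into one kernel-verified Lean document; each statement's English description precedes it below -/
import Mathlib

section
/- Fix integers r ≥ 2, s ≥ 1, n ≥ 1 and degrees d₁,...,d_s with 1 ≤ d_j ≤ n for all j. If ∑_{j=1}^s (n - d_j + 1) ≤ n(r-1), then the element ∏_{j=1}^s ∏_{i=0}^{n-d_j} (ε_{i+1} + ε_{i+2} + ⋯ + ε_{i+d_j}) is nonzero in the ring ℤ[ε₁,...,ε_n]/(ε₁^r,...,ε_n^r). -/
open MvPolynomial

section Aux

lemma count_split_aux (p : ℕ → Prop) [DecidablePred p] (A B : ℕ) :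
    ((Finset.range (A + B)).filter p).card
      = ((Finset.range A).filter p).card
        + ((Finset.range B).filter (fun t => p (A + t))).card := by
  rw [Finset.range_add, Finset.filter_union, Finset.card_union_of_disjoint,
    Finset.filter_map, Finset.card_map]
  · rfl
  · exact Finset.disjoint_filter_filter
      (Finset.disjoint_range_addLeftEmbedding A (Finset.range B))

lemma count_blocks_aux (p : ℕ → Prop) [DecidablePred p] (m : ℕ → ℕ) (s : ℕ) :
    ((Finset.range (∑ x ∈ Finset.range s, m x)).filter p).card
      = ∑ x ∈ Finset.range s, ((Finset.range (m x)).filter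
          (fun t => p ((∑ y ∈ Finset.range x, m y) + t))).card := by
  induction s with
  | zero => simp
  | succ s ih => rw [Finset.sum_range_succ, count_split_aux, ih, Finset.sum_range_succ]

lemma count_mod_mul_aux (n c k : ℕ) :
    ((Finset.range (n * c)).filter (fun u => u % n = k)).card ≤ c := by
  induction c with
  | zero => simp
  | succ c ih =>
    rw [Nat.mul_succ, count_split_aux]
    have h2 : ((Finset.range n).filter (fun t => (n * c + t) % n = k)).card ≤ 1 := by
      refine Finset.card_le_one.2 (fun a ha b hb => ?_)
      simp only [Finset.mem_filter, Finset.mem_range] at ha hb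
      rw [Nat.mul_add_mod, Nat.mod_eq_of_lt ha.1] at ha
      rw [Nat.mul_add_mod, Nat.mod_eq_of_lt hb.1] at hb
      omega
    omega

lemma count_mod_le_aux (n c k N : ℕ) (hN : N ≤ n * c) :
    ((Finset.range N).filter (fun u => u % n = k)).card ≤ c :=
  le_trans (Finset.card_le_card
    (Finset.filter_subset_filter _ (Finset.range_subset_range.2 hN)))
    (count_mod_mul_aux n c k)

lemma cyclic_key_aux (n a mv M q i : ℕ) (ha : a < n) (hm : mv ≤ n)
    (hq : n * q + a = M) (hi : i < mv) :
    (M + (if i < a + mv - n then i + (n - a) else i - (a + mv - n))) % n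
      = (if i < a + mv - n then i else a + (i - (a + mv - n))) := by
  split_ifs with h
  · have he : M + (i + (n - a)) = n * q + (n + i) := by omega
    rw [he, Nat.mul_add_mod, Nat.add_mod_left, Nat.mod_eq_of_lt (by omega)]
  · have hlt : a + (i - (a + mv - n)) < n := by omega
    have he : M + (i - (a + mv - n)) = n * q + (a + (i - (a + mv - n))) := by omega
    rw [he, Nat.mul_add_mod, Nat.mod_eq_of_lt hlt]

lemma cyclic_bij_aux (n mv a M : ℕ) (hn : 0 < n) (ha : a < n) (hm : mv ≤ n)
    (hMa : M % n = a) (k : ℕ) :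
    ((Finset.range mv).filter
        (fun i => (if i < a + mv - n then i else a + (i - (a + mv - n))) = k)).card
      = ((Finset.range mv).filter (fun t => (M + t) % n = k)).card := by
  have hq' := Nat.div_add_mod M n
  rw [hMa] at hq'
  have hkey : ∀ i, i < mv →
      (M + (if i < a + mv - n then i + (n - a) else i - (a + mv - n))) % n
        = (if i < a + mv - n then i else a + (i - (a + mv - n))) :=
    fun i hi => cyclic_key_aux n a mv M (M / n) i ha hm hq' hi
  refine Finset.card_nbij'
    (fun i => if i < a + mv - n then i + (n - a) else i - (a + mv - n))
    (fun t => if t + a < n then t + (a + mv - n) else t - (n - a)) ?_ ?_ ?_ ?_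
  · intro i hi
    simp only [Finset.mem_coe, Finset.mem_filter, Finset.mem_range] at hi ⊢
    refine ⟨by split_ifs <;> omega, ?_⟩
    rw [hkey i hi.1]; exact hi.2
  · intro t ht
    simp only [Finset.mem_coe, Finset.mem_filter, Finset.mem_range] at ht ⊢
    have hρ : (if t + a < n then t + (a + mv - n) else t - (n - a)) < mv := by
      split_ifs <;> omega
    refine ⟨hρ, ?_⟩
    have hπρ : (if (if t + a < n then t + (a + mv - n) else t - (n - a)) < a + mv - n
        then (if t + a < n then t + (a + mv - n) else t - (n - a)) + (n - a)
        else (if t + a < n then t + (a + mv - n) else t - (n - a)) - (a + mv - n)) = t := by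
      split_ifs <;> omega
    rw [← hkey _ hρ, hπρ]; exact ht.2
  · intro i hi
    simp only [Finset.mem_coe, Finset.mem_filter, Finset.mem_range] at hi
    dsimp only
    split_ifs <;> omega
  · intro t ht
    simp only [Finset.mem_coe, Finset.mem_filter, Finset.mem_range] at ht
    dsimp only
    split_ifs <;> omega

lemma cyclic_bounds_aux (n mv a i : ℕ) (ha : a < n) (hm : mv ≤ n) (hi : i < mv) :
    i ≤ (if i < a + mv - n then i else a + (i - (a + mv - n)))
    ∧ (if i < a + mv - n then i else a + (i - (a + mv - n))) < n
    ∧ (if i < a + mv - n then i else a + (i - (a + mv - n))) < i + (n - mv + 1) := by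
  split_ifs <;> omega

lemma coeff_prod_ne_zero_aux {σ ι : Type*} (t : Finset ι)
    (f h : ι → MvPolynomial σ ℕ) (g : ι → σ)
    (hf : ∀ a ∈ t, f a = X (g a) + h a) :
    coeff (∑ a ∈ t, Finsupp.single (g a) 1) (∏ a ∈ t, f a) ≠ 0 := by
  induction t using Finset.cons_induction with
  | empty => simp
  | cons a t ha ih =>
    rw [Finset.prod_cons, Finset.sum_cons, hf a (Finset.mem_cons_self a t),
      add_mul, coeff_add, coeff_X_mul]
    have := ih (fun b hb => hf b (Finset.mem_cons_of_mem hb))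
    omega

end Aux

/-- Nonvanishing of the Chow-class product: if the defect ∑ⱼ (n - dⱼ + 1) is at most
n(r-1), then ∏ⱼ ∏_{i=0}^{n-dⱼ} (ε_{i+1} + ⋯ + ε_{i+dⱼ}) is nonzero in
ℤ[ε₁,…,ε_n]/(ε₁^r,…,ε_n^r).  (Variables are 0-indexed: ε_{k+1} is `X k`.) -/
theorem stmt_5 (r s n : ℕ) (hr : 2 ≤ r) (hs : 1 ≤ s) (hn : 1 ≤ n)
    (d : Fin s → ℕ) (hd1 : ∀ j, 1 ≤ d j) (hdn : ∀ j, d j ≤ n)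
    (hdf : ∑ j, (n - d j + 1) ≤ n * (r - 1)) :
    (Ideal.Quotient.mk (Ideal.span (Set.range fun i : Fin n => (X i : MvPolynomial (Fin n) ℤ) ^ r)))
        (∏ j, ∏ i ∈ Finset.range (n - d j + 1),
          ∑ k ∈ Finset.range (d j),
            (if h : i + k < n then (X (⟨i + k, h⟩ : Fin n) : MvPolynomial (Fin n) ℤ) else 0))
      ≠ 0 := by
  have hn' : 0 < n := hn
  set Pz : MvPolynomial (Fin n) ℤ :=
    ∏ j, ∏ i ∈ Finset.range (n - d j + 1),
      ∑ k ∈ Finset.range (d j),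
        (if h : i + k < n then (X (⟨i + k, h⟩ : Fin n) : MvPolynomial (Fin n) ℤ) else 0)
    with hPz
  set fn : ℕ → Fin n := fun v => ⟨v % n, Nat.mod_lt v hn'⟩ with hfn
  set m' : ℕ → ℕ := fun x => if h : x < s then n - d ⟨x, h⟩ + 1 else 0 with hm'def
  set M : ℕ → ℕ := fun x => ∑ y ∈ Finset.range x, m' y with hMdef
  set GG : ℕ → ℕ → ℕ := fun x i =>
    if i < M x % n + m' x - n then i else M x % n + (i - (M x % n + m' x - n)) with hGGdef
  have hm'_eq : ∀ j : Fin s, m' j.val = n - d j + 1 := by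
    intro j
    simp only [hm'def]
    rw [dif_pos j.isLt]
  have hmle : ∀ x, m' x ≤ n := by
    intro x
    simp only [hm'def]
    split
    · next h => have h1 := hd1 ⟨x, h⟩; have h2 := hdn ⟨x, h⟩; omega
    · omega
  have hGb : ∀ x i, i < m' x →
      i ≤ GG x i ∧ GG x i < n ∧ GG x i < i + (n - m' x + 1) := by
    intro x i hi
    simp only [hGGdef]
    exact cyclic_bounds_aux n (m' x) (M x % n) i (Nat.mod_lt _ hn') (hmle x) hi
  have hGbij : ∀ x k, ((Finset.range (m' x)).filter (fun i => GG x i = k)).card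
      = ((Finset.range (m' x)).filter (fun t => (M x + t) % n = k)).card := by
    intro x k
    simp only [hGGdef]
    exact cyclic_bij_aux n (m' x) (M x % n) (M x) hn' (Nat.mod_lt _ hn') (hmle x) rfl k
  -- the index set and the polynomials over ℕ
  set Sig := (Finset.univ : Finset (Fin s)).sigma (fun j => Finset.range (m' j.val)) with hSig
  set gg : (Σ _ : Fin s, ℕ) → Fin n := fun a => fn (GG a.1.val a.2) with hgg
  set F : (Σ _ : Fin s, ℕ) → MvPolynomial (Fin n) ℕ :=
    fun a => ∑ k ∈ Finset.range (d a.1), X (fn (a.2 + k)) with hF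
  set H : (Σ _ : Fin s, ℕ) → MvPolynomial (Fin n) ℕ :=
    fun a => ∑ k ∈ (Finset.range (d a.1)).erase (GG a.1.val a.2 - a.2), X (fn (a.2 + k)) with hH
  set μ : Fin n →₀ ℕ := ∑ a ∈ Sig, Finsupp.single (gg a) 1 with hμdef
  set Pn : MvPolynomial (Fin n) ℕ := ∏ a ∈ Sig, F a with hPndef
  have hf : ∀ a ∈ Sig, F a = X (gg a) + H a := by
    rintro ⟨j, i⟩ ha
    simp only [hSig, Finset.mem_sigma, Finset.mem_univ, Finset.mem_range, true_and] at ha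
    obtain ⟨hb1, hb2, hb3⟩ := hGb j.val i ha
    have hd' : n - m' j.val + 1 = d j := by
      have e1 := hm'_eq j; have e2 := hdn j; have e3 := hd1 j; omega
    have hcmem : GG j.val i - i ∈ Finset.range (d j) := by
      rw [Finset.mem_range]; omega
    have hic : i + (GG j.val i - i) = GG j.val i := by omega
    simp only [hF, hH, hgg]
    rw [← Finset.add_sum_erase _ _ hcmem, hic]
  have hcoeff : coeff μ Pn ≠ 0 := by
    rw [hPndef, hμdef]
    exact coeff_prod_ne_zero_aux Sig F H gg hf
  -- the exponent bound
  have hμval : ∀ k : Fin n, μ k ≤ r - 1 := by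
    intro k
    have hks : μ k = ∑ j : Fin s, ∑ i ∈ Finset.range (m' j.val),
        (if fn (GG j.val i) = k then (1 : ℕ) else 0) := by
      rw [hμdef, Finsupp.finset_sum_apply, hSig, Finset.sum_sigma]
      exact Finset.sum_congr rfl fun j _ => Finset.sum_congr rfl
        fun i _ => Finsupp.single_apply
    have h2 : ∀ j : Fin s, (∑ i ∈ Finset.range (m' j.val),
        (if fn (GG j.val i) = k then (1 : ℕ) else 0))
        = ((Finset.range (m' j.val)).filter (fun i => GG j.val i = k.val)).card := by
      intro j
      rw [Finset.card_filter]
      refine Finset.sum_congr rfl fun i hi => ?_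
      have hlt : GG j.val i < n := (hGb j.val i (Finset.mem_range.mp hi)).2.1
      have hiff : (fn (GG j.val i) = k) ↔ (GG j.val i = k.val) := by
        simp [hfn, Fin.ext_iff, Nat.mod_eq_of_lt hlt]
      simp only [hiff]
    rw [hks]
    have h3 : ∑ j : Fin s, ∑ i ∈ Finset.range (m' j.val),
        (if fn (GG j.val i) = k then (1 : ℕ) else 0)
        = ∑ j : Fin s, ((Finset.range (m' j.val)).filter
            (fun t => (M j.val + t) % n = k.val)).card := by
      refine Finset.sum_congr rfl fun j _ => ?_
      rw [h2 j, hGbij j.val k.val]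
    rw [h3]
    rw [Fin.sum_univ_eq_sum_range
      (fun x => ((Finset.range (m' x)).filter (fun t => (M x + t) % n = k.val)).card) s]
    have h4 := count_blocks_aux (fun u => u % n = k.val) m' s
    simp only [hMdef]
    rw [← h4]
    refine count_mod_le_aux n (r - 1) k.val _ ?_
    have h5 : ∑ x ∈ Finset.range s, m' x = ∑ j : Fin s, (n - d j + 1) := by
      rw [← Fin.sum_univ_eq_sum_range m' s]
      exact Finset.sum_congr rfl fun j _ => hm'_eq j
    omega
  -- the polynomial over ℤ is the image of the one over ℕ
  have hmap : map (Nat.castRingHom ℤ) Pn = Pz := by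
    rw [hPndef, hSig, Finset.prod_sigma, hPz, map_prod]
    refine Finset.prod_congr rfl fun j _ => ?_
    rw [map_prod, hm'_eq j]
    refine Finset.prod_congr rfl fun i hi => ?_
    simp only [hF]
    rw [map_sum]
    refine Finset.sum_congr rfl fun k hk => ?_
    rw [map_X]
    rw [Finset.mem_range] at hi hk
    have hik : i + k < n := by have := hdn j; have := hd1 j; omega
    rw [dif_pos hik]
    congr 1
    simp only [hfn]
    exact Fin.ext (Nat.mod_eq_of_lt hik)
  -- finish
  rw [Ne, Ideal.Quotient.eq_zero_iff_mem]
  intro h0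
  have hset : (Set.range fun i : Fin n => (X i : MvPolynomial (Fin n) ℤ) ^ r)
      = (fun s0 : Fin n →₀ ℕ => monomial s0 (1 : ℤ)) ''
          Set.range (fun i : Fin n => Finsupp.single i r) := by
    rw [← Set.range_comp]
    exact congrArg Set.range (funext fun i => X_pow_eq_monomial)
  rw [hset, mem_ideal_span_monomial_image] at h0
  have hsupp : μ ∈ Pz.support := by
    rw [MvPolynomial.mem_support_iff, ← hmap, MvPolynomial.coeff_map]
    simpa using hcoeff
  obtain ⟨si, hsi, hle⟩ := h0 μ hsupp
  obtain ⟨i0, rfl⟩ := hsi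
  have h1 : r ≤ μ i0 := by
    have := hle i0
    simpa using this
  have h2 := hμval i0
  omega
end

section
/- In the ring ℤ[ε₁,...,ε_n]/(ε₁^r,...,ε_n^r) with the coefficientwise partial order on canonical representatives, for any 1 ≤ d ≤ n one has ε₁ · ∏_{i=1}^{n-d}(ε_{i+1}+⋯+ε_{i+d}) ≤ ∏_{i=0}^{n-d}(ε_{i+1}+⋯+ε_{i+d}), and ∏_{i=0}^{n-d}(ε_{i+2}+⋯+ε_{i+d}) ≤ ∏_{i=0}^{n-d}(ε_{i+1}+⋯+ε_{i+d}). -/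
open MvPolynomial

/-- P ≤ Q in ℤ[ε₁,…,ε_n]/(ε₁^r,…,ε_n^r): the difference Q - P is represented by a
polynomial with all exponents < r and nonnegative coefficients. -/
def ChowLe (n r : ℕ)
    (P Q : MvPolynomial (Fin n) ℤ ⧸
      Ideal.span (Set.range fun i : Fin n => (X i : MvPolynomial (Fin n) ℤ) ^ r)) : Prop :=
  ∃ p : MvPolynomial (Fin n) ℤ,
    (∀ m ∈ p.support, ∀ i, m i < r) ∧ (∀ m, 0 ≤ p.coeff m) ∧ Ideal.Quotient.mk _ p = Q - P


def NN {n : ℕ} (p : MvPolynomial (Fin n) ℤ) : Prop := ∀ m, 0 ≤ p.coeff m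

lemma NN_zero {n : ℕ} : NN (0 : MvPolynomial (Fin n) ℤ) := fun m => by simp

lemma NN_one {n : ℕ} : NN (1 : MvPolynomial (Fin n) ℤ) := fun m => by
  rw [coeff_one]; split <;> norm_num

lemma NN_X {n : ℕ} (i : Fin n) : NN (X i : MvPolynomial (Fin n) ℤ) := fun m => by
  rw [coeff_X']; split <;> norm_num

lemma NN.add {n : ℕ} {p q : MvPolynomial (Fin n) ℤ} (hp : NN p) (hq : NN q) : NN (p + q) :=
  fun m => by simpa [coeff_add] using add_nonneg (hp m) (hq m)

lemma NN.mul {n : ℕ} {p q : MvPolynomial (Fin n) ℤ} (hp : NN p) (hq : NN q) : NN (p * q) :=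
  fun m => by
    rw [coeff_mul]; exact Finset.sum_nonneg fun x _ => mul_nonneg (hp _) (hq _)

lemma NN.sum {n : ℕ} {ι : Type*} (s : Finset ι) (f : ι → MvPolynomial (Fin n) ℤ)
    (h : ∀ i ∈ s, NN (f i)) : NN (∑ i ∈ s, f i) := fun m => by
  rw [coeff_sum]; exact Finset.sum_nonneg fun i hi => h i hi m

lemma NN.prod {n : ℕ} {ι : Type*} (s : Finset ι) (f : ι → MvPolynomial (Fin n) ℤ)
    (h : ∀ i ∈ s, NN (f i)) : NN (∏ i ∈ s, f i) := by
  classical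
  induction s using Finset.induction with
  | empty => simpa using NN_one
  | insert a s ha ih =>
      rw [Finset.prod_insert ha]
      exact (h _ (Finset.mem_insert_self _ _)).mul
        (ih fun i hi => h i (Finset.mem_insert_of_mem hi))

lemma NN_dite {n : ℕ} (c : Prop) [Decidable c] (i : c → Fin n) :
    NN (if h : c then (X (i h) : MvPolynomial (Fin n) ℤ) else 0) := by
  split
  · exact NN_X _
  · exact NN_zero

lemma NN_prod_sub_prod {n : ℕ} {ι : Type*} (s : Finset ι) (f g : ι → MvPolynomial (Fin n) ℤ)
    (hf : ∀ i ∈ s, NN (f i)) (hg : ∀ i ∈ s, NN (g i)) (hfg : ∀ i ∈ s, NN (f i - g i)) :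
    NN (∏ i ∈ s, f i - ∏ i ∈ s, g i) := by
  classical
  induction s using Finset.induction with
  | empty => simpa using NN_zero
  | @insert a s ha ih =>
      have key : ∏ i ∈ insert a s, f i - ∏ i ∈ insert a s, g i
          = (f a - g a) * ∏ i ∈ s, f i + g a * (∏ i ∈ s, f i - ∏ i ∈ s, g i) := by
        rw [Finset.prod_insert ha, Finset.prod_insert ha]; ring
      rw [key]
      exact NN.add
        ((hfg a (Finset.mem_insert_self _ _)).mul
          (NN.prod s f fun i hi => hf i (Finset.mem_insert_of_mem hi)))
        ((hg a (Finset.mem_insert_self _ _)).mul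
          (ih (fun i hi => hf i (Finset.mem_insert_of_mem hi))
              (fun i hi => hg i (Finset.mem_insert_of_mem hi))
              (fun i hi => hfg i (Finset.mem_insert_of_mem hi))))

lemma exists_rep {n : ℕ} (r : ℕ) (q : MvPolynomial (Fin n) ℤ) (hq : NN q) :
    ∃ p : MvPolynomial (Fin n) ℤ,
      (∀ m ∈ p.support, ∀ i, m i < r) ∧ (∀ m, 0 ≤ p.coeff m) ∧
      Ideal.Quotient.mk
        (Ideal.span (Set.range fun i : Fin n => (X i : MvPolynomial (Fin n) ℤ) ^ r)) p
        = Ideal.Quotient.mk _ q := by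
  classical
  set I := Ideal.span (Set.range fun i : Fin n => (X i : MvPolynomial (Fin n) ℤ) ^ r) with hI
  set S := q.support.filter (fun m => ∀ i, m i < r) with hS
  refine ⟨∑ m ∈ S, monomial m (q.coeff m), ?_, ?_, ?_⟩
  · intro m hm i
    have := Finset.mem_of_subset MvPolynomial.support_sum hm
    rw [Finset.mem_biUnion] at this
    obtain ⟨m', hm', hmm⟩ := this
    have h2 := MvPolynomial.support_monomial_subset hmm
    simp only [Finset.mem_singleton] at h2
    subst h2
    exact (Finset.mem_filter.mp hm').2 i
  · intro m
    rw [coeff_sum]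
    exact Finset.sum_nonneg fun m' _ => by
      rw [coeff_monomial]; split
      · exact hq _
      · exact le_refl 0
  · rw [Ideal.Quotient.eq]
    have hsplit : q = (∑ m ∈ S, monomial m (q.coeff m)) +
        ∑ m ∈ q.support.filter (fun m => ¬ ∀ i, m i < r), monomial m (q.coeff m) := by
      rw [hS, Finset.sum_filter_add_sum_filter_not]
      exact (MvPolynomial.support_sum_monomial_coeff q).symm
    have : (∑ m ∈ S, monomial m (q.coeff m)) - q
        = -(∑ m ∈ q.support.filter (fun m => ¬ ∀ i, m i < r), monomial m (q.coeff m)) := by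
      linear_combination -hsplit
    rw [this]
    refine neg_mem (Ideal.sum_mem _ fun m hm => ?_)
    have hm' := (Finset.mem_filter.mp hm).2
    push_neg at hm'
    obtain ⟨i, hi⟩ := hm'
    have hle : Finsupp.single i r ≤ m := Finsupp.single_le_iff.mpr hi
    have heq : monomial m (q.coeff m)
        = (X i : MvPolynomial (Fin n) ℤ) ^ r * monomial (m - Finsupp.single i r) (q.coeff m) := by
      rw [MvPolynomial.X_pow_eq_monomial, MvPolynomial.monomial_mul, one_mul,
        add_tsub_cancel_of_le hle]
    rw [heq]
    exact Ideal.mul_mem_right _ _ (Ideal.subset_span ⟨i, rfl⟩)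

/-- For 1 ≤ d ≤ n one has
ε₁ · ∏_{i=1}^{n-d} (ε_{i+1}+⋯+ε_{i+d}) ≤ ∏_{i=0}^{n-d} (ε_{i+1}+⋯+ε_{i+d}) and
∏_{i=0}^{n-d} (ε_{i+2}+⋯+ε_{i+d}) ≤ ∏_{i=0}^{n-d} (ε_{i+1}+⋯+ε_{i+d}).
(0-indexed: ε_{k+1} is `X k`, so ε_{i+1}+⋯+ε_{i+d} = ∑_{k<d} X_{i+k}.) -/
theorem stmt_11 (n r d : ℕ) (hr : 2 ≤ r) (hn : 1 ≤ n) (hd1 : 1 ≤ d) (hdn : d ≤ n) :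
    ChowLe n r
      ((Ideal.Quotient.mk _)
        ((X (⟨0, hn⟩ : Fin n) : MvPolynomial (Fin n) ℤ) *
          ∏ i ∈ Finset.Icc 1 (n - d), ∑ k ∈ Finset.range d,
            (if h : i + k < n then (X (⟨i + k, h⟩ : Fin n) : MvPolynomial (Fin n) ℤ) else 0)))
      ((Ideal.Quotient.mk _)
        (∏ i ∈ Finset.range (n - d + 1), ∑ k ∈ Finset.range d,
          (if h : i + k < n then (X (⟨i + k, h⟩ : Fin n) : MvPolynomial (Fin n) ℤ) else 0)))
    ∧
    ChowLe n r
      ((Ideal.Quotient.mk _)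
        (∏ i ∈ Finset.range (n - d + 1), ∑ k ∈ Finset.Ico 1 d,
          (if h : i + k < n then (X (⟨i + k, h⟩ : Fin n) : MvPolynomial (Fin n) ℤ) else 0)))
      ((Ideal.Quotient.mk _)
        (∏ i ∈ Finset.range (n - d + 1), ∑ k ∈ Finset.range d,
          (if h : i + k < n then (X (⟨i + k, h⟩ : Fin n) : MvPolynomial (Fin n) ℤ) else 0))) := by
  classical
  set L : ℕ → MvPolynomial (Fin n) ℤ :=
    fun i => ∑ k ∈ Finset.range d,
      if h : i + k < n then (X (⟨i + k, h⟩ : Fin n) : MvPolynomial (Fin n) ℤ) else 0 with hLdef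
  set L' : ℕ → MvPolynomial (Fin n) ℤ :=
    fun i => ∑ k ∈ Finset.Ico 1 d,
      if h : i + k < n then (X (⟨i + k, h⟩ : Fin n) : MvPolynomial (Fin n) ℤ) else 0 with hL'def
  have hNNL : ∀ i, NN (L i) := by
    intro i; simp only [hLdef]; exact NN.sum _ _ fun k _ => NN_dite _ _
  have hNNL' : ∀ i, NN (L' i) := by
    intro i; simp only [hL'def]; exact NN.sum _ _ fun k _ => NN_dite _ _
  have hL0 : ∀ i : ℕ, L i =
      (if h : i + 0 < n then (X (⟨i + 0, h⟩ : Fin n) : MvPolynomial (Fin n) ℤ) else 0) + L' i := by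
    intro i
    simp only [hLdef, hL'def]
    rw [Finset.range_eq_Ico, Finset.sum_eq_sum_Ico_succ_bot hd1]
  have hL00 : L 0 = X (⟨0, hn⟩ : Fin n) + L' 0 := by
    rw [hL0 0]
    congr 1
    have h0 : (0 : ℕ) + 0 < n := hn
    rw [dif_pos h0]
  have hprod : ∏ i ∈ Finset.range (n - d + 1), L i
      = L 0 * ∏ i ∈ Finset.Icc 1 (n - d), L i := by
    rw [Finset.range_eq_Ico, Finset.prod_eq_prod_Ico_succ_bot (Nat.succ_pos _),
      Nat.succ_eq_add_one, Finset.Ico_add_one_right_eq_Icc]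
  constructor
  · have hQP : (∏ i ∈ Finset.range (n - d + 1), L i)
        - (X (⟨0, hn⟩ : Fin n) : MvPolynomial (Fin n) ℤ) * ∏ i ∈ Finset.Icc 1 (n - d), L i
        = L' 0 * ∏ i ∈ Finset.Icc 1 (n - d), L i := by
      rw [hprod, hL00]; ring
    have hNN1 : NN ((∏ i ∈ Finset.range (n - d + 1), L i)
        - (X (⟨0, hn⟩ : Fin n) : MvPolynomial (Fin n) ℤ) * ∏ i ∈ Finset.Icc 1 (n - d), L i) := by
      rw [hQP]
      exact (hNNL' 0).mul (NN.prod _ _ fun i _ => hNNL i)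
    obtain ⟨p, h1, h2, h3⟩ := exists_rep r _ hNN1
    exact ⟨p, h1, h2, by rw [h3, RingHom.map_sub]⟩
  · have hNN2 : NN ((∏ i ∈ Finset.range (n - d + 1), L i)
        - ∏ i ∈ Finset.range (n - d + 1), L' i) :=
      NN_prod_sub_prod _ _ _ (fun i _ => hNNL i) (fun i _ => hNNL' i)
        (fun i _ => by rw [hL0 i]; simpa using NN_dite _ _)
    obtain ⟨p, h1, h2, h3⟩ := exists_rep r _ hNN2
    exact ⟨p, h1, h2, by rw [h3, RingHom.map_sub]⟩
end

section
/- In ℤ[ε₁,...,ε_n]/(ε₁²,...,ε_n²), for n ≥ 2 the product ∏_{i=0}^{n-2}(ε_{i+1}+ε_{i+2}) of the n-1 consecutive-pair sums is equal to a polynomial with nonnegative coefficients whose coefficient at the square-free monomial ε₁ε₂⋯ε_{n-1} is 1; in particular the product is nonzero. -/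
open MvPolynomial

namespace Stmt12Aux

noncomputable def D (n m k : ℕ) : Fin n →₀ ℕ :=
  Finsupp.equivFunOnFinite.symm fun i => if (i : ℕ) ≤ m ∧ (i : ℕ) ≠ k then 1 else 0

lemma D_apply (n m k : ℕ) (i : Fin n) :
    D n m k i = if (i : ℕ) ≤ m ∧ (i : ℕ) ≠ k then 1 else 0 := rfl

noncomputable def q (n m : ℕ) : MvPolynomial (Fin n) ℤ :=
  ∑ k ∈ Finset.range (m + 1), monomial (D n m k) 1

noncomputable def I (n : ℕ) : Ideal (MvPolynomial (Fin n) ℤ) :=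
  Ideal.span (Set.range fun i : Fin n => (X i : MvPolynomial (Fin n) ℤ) ^ 2)

noncomputable def F (n i : ℕ) : MvPolynomial (Fin n) ℤ :=
  (if h : i < n then (X (⟨i, h⟩ : Fin n) : MvPolynomial (Fin n) ℤ) else 0) +
  (if h : i + 1 < n then (X (⟨i + 1, h⟩ : Fin n) : MvPolynomial (Fin n) ℤ) else 0)

lemma monomial_mem_I {n : ℕ} (d : Fin n →₀ ℕ) (c : ℤ) (j : Fin n) (hj : 2 ≤ d j) :
    monomial d c ∈ I n := by
  have hdvd : (X j : MvPolynomial (Fin n) ℤ) ^ 2 ∣ monomial d c := by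
    rw [X_pow_eq_monomial]
    refine monomial_dvd_monomial.2 ⟨Or.inr fun i => ?_, one_dvd _⟩
    rcases eq_or_ne i j with rfl | h
    · simpa [Finsupp.single_apply] using hj
    · simp [Finsupp.single_apply, Ne.symm h]
  obtain ⟨c', hc'⟩ := hdvd
  rw [hc']
  exact Ideal.mul_mem_right _ _ (Ideal.subset_span ⟨j, rfl⟩)

lemma coeff_q (n m : ℕ) (d : Fin n →₀ ℕ) :
    (q n m).coeff d = ∑ k ∈ Finset.range (m + 1), if D n m k = d then 1 else 0 := by
  simp only [q, MvPolynomial.coeff_sum, coeff_monomial]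

lemma X_eq (n : ℕ) (a : Fin n) :
    (X a : MvPolynomial (Fin n) ℤ) = monomial (Finsupp.single a 1) 1 := by
  rw [← pow_one (X a : MvPolynomial (Fin n) ℤ), X_pow_eq_monomial]

lemma E1 (n m : ℕ) (hm : m + 1 < n) :
    D n m m + Finsupp.single (⟨m, by omega⟩ : Fin n) 1 = D n (m + 1) (m + 1) := by
  ext i
  simp only [Finsupp.add_apply, D_apply, Finsupp.single_apply, Fin.ext_iff]
  split_ifs <;> omega

lemma E2 (n m k : ℕ) (hm : m + 1 < n) (hk : k ≤ m) :
    D n m k + Finsupp.single (⟨m + 1, hm⟩ : Fin n) 1 = D n (m + 1) k := by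
  ext i
  simp only [Finsupp.add_apply, D_apply, Finsupp.single_apply, Fin.ext_iff]
  split_ifs <;> omega

lemma step (n m : ℕ) (hm : m + 1 < n) :
    Ideal.Quotient.mk (I n)
        (q n m * (X (⟨m, by omega⟩ : Fin n) + X (⟨m + 1, hm⟩ : Fin n)))
      = Ideal.Quotient.mk (I n) (q n (m + 1)) := by
  rw [Ideal.Quotient.eq]
  have key : q n m * (X (⟨m, by omega⟩ : Fin n) + X (⟨m + 1, hm⟩ : Fin n))
      = (∑ k ∈ Finset.range m,
          monomial (D n m k + Finsupp.single (⟨m, by omega⟩ : Fin n) 1) 1) + q n (m + 1) := by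
    rw [mul_add]
    have hA : q n m * X (⟨m, by omega⟩ : Fin n)
        = ∑ k ∈ Finset.range (m + 1),
            monomial (D n m k + Finsupp.single (⟨m, by omega⟩ : Fin n) 1) 1 := by
      rw [q, Finset.sum_mul]
      exact Finset.sum_congr rfl fun k _ => by rw [X_eq, monomial_mul, one_mul]
    have hB : q n m * X (⟨m + 1, hm⟩ : Fin n)
        = ∑ k ∈ Finset.range (m + 1), monomial (D n (m + 1) k) 1 := by
      rw [q, Finset.sum_mul]
      refine Finset.sum_congr rfl fun k hk => ?_
      rw [X_eq, monomial_mul, one_mul, E2 n m k hm (Nat.lt_succ_iff.1 (Finset.mem_range.1 hk))]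
    have hq : q n (m + 1) = (∑ k ∈ Finset.range (m + 1), monomial (D n (m + 1) k) 1)
        + monomial (D n (m + 1) (m + 1)) 1 := by
      rw [q, Finset.sum_range_succ]
    rw [hA, hB, hq, Finset.sum_range_succ, E1 n m hm]
    ring
  rw [key]
  have h2 : (∑ k ∈ Finset.range m,
      monomial (D n m k + Finsupp.single (⟨m, by omega⟩ : Fin n) 1) 1) + q n (m + 1) - q n (m + 1)
      = ∑ k ∈ Finset.range m,
          monomial (D n m k + Finsupp.single (⟨m, by omega⟩ : Fin n) 1) 1 := by ring
  rw [h2]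
  refine Ideal.sum_mem _ fun k hk => ?_
  refine monomial_mem_I _ _ (⟨m, by omega⟩ : Fin n) ?_
  have hk' : k < m := Finset.mem_range.1 hk
  simp only [Finsupp.add_apply, D_apply, Finsupp.single_apply]
  split_ifs <;> omega

lemma prod_eq (n : ℕ) : ∀ m, m < n →
    Ideal.Quotient.mk (I n) (∏ i ∈ Finset.range m, F n i)
      = Ideal.Quotient.mk (I n) (q n m) := by
  intro m
  induction m with
  | zero =>
    intro _
    have hD : D n 0 0 = 0 := by
      ext i
      simp only [D_apply, Finsupp.coe_zero, Pi.zero_apply]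
      split_ifs <;> omega
    have : q n 0 = 1 := by
      rw [q]
      simp [hD]
    rw [this, Finset.prod_range_zero]
  | succ m ih =>
    intro hm
    rw [Finset.prod_range_succ, map_mul, ih (by omega), ← map_mul]
    have hF : F n m = X (⟨m, by omega⟩ : Fin n) + X (⟨m + 1, hm⟩ : Fin n) := by
      rw [F, dif_pos (show m < n by omega), dif_pos hm]
    rw [hF]
    exact step n m hm

lemma coeff_eq_zero_of_mem {n : ℕ} {a : MvPolynomial (Fin n) ℤ} (ha : a ∈ I n)
    (t : Fin n →₀ ℕ) (ht : ∀ i, t i ≤ 1) : a.coeff t = 0 := by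
  refine Submodule.span_induction (p := fun x _ => ∀ u : Fin n →₀ ℕ, (∀ i, u i ≤ 1) →
      MvPolynomial.coeff u x = 0) ?_ ?_ ?_ ?_ ha t ht
  · rintro x ⟨j, rfl⟩ u hu
    rw [coeff_X_pow, if_neg]
    intro hc
    have := hu j
    rw [← hc, Finsupp.single_apply, if_pos rfl] at this
    omega
  · intro u _; simp
  · intro x y _ _ hx hy u hu
    rw [MvPolynomial.coeff_add, hx u hu, hy u hu, add_zero]
  · intro r x _ hx u hu
    rw [smul_eq_mul, MvPolynomial.coeff_mul]
    refine Finset.sum_eq_zero fun p hp => ?_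
    rw [Finset.HasAntidiagonal.mem_antidiagonal] at hp
    have h2 : ∀ i, p.2 i ≤ 1 := fun i => by
      have := hu i
      rw [← hp, Finsupp.add_apply] at this
      omega
    rw [hx p.2 h2, mul_zero]

end Stmt12Aux

open Stmt12Aux in
/-- In ℤ[ε₁,…,ε_n]/(ε₁²,…,ε_n²) with n ≥ 2, the product ∏_{i=0}^{n-2}(ε_{i+1}+ε_{i+2})
is represented by a polynomial with exponents < 2 and nonnegative coefficients whose
coefficient at ε₁ε₂⋯ε_{n-1} is 1; in particular the product is nonzero.
(0-indexed: ε_{k+1} is `X k`.) -/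
theorem stmt_12 (n : ℕ) (hn : 2 ≤ n) :
    (∃ p : MvPolynomial (Fin n) ℤ,
      (∀ m ∈ p.support, ∀ i, m i < 2) ∧ (∀ m, 0 ≤ p.coeff m) ∧
      p.coeff (Finsupp.equivFunOnFinite.symm fun i : Fin n => if (i : ℕ) < n - 1 then 1 else 0)
        = 1 ∧
      Ideal.Quotient.mk
          (Ideal.span (Set.range fun i : Fin n => (X i : MvPolynomial (Fin n) ℤ) ^ 2)) p
        = Ideal.Quotient.mk _
            (∏ i ∈ Finset.range (n - 1),
              ((if h : i < n then (X (⟨i, h⟩ : Fin n) : MvPolynomial (Fin n) ℤ) else 0) +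
               (if h : i + 1 < n then (X (⟨i + 1, h⟩ : Fin n) : MvPolynomial (Fin n) ℤ) else 0))))
    ∧
    Ideal.Quotient.mk
        (Ideal.span (Set.range fun i : Fin n => (X i : MvPolynomial (Fin n) ℤ) ^ 2))
        (∏ i ∈ Finset.range (n - 1),
          ((if h : i < n then (X (⟨i, h⟩ : Fin n) : MvPolynomial (Fin n) ℤ) else 0) +
           (if h : i + 1 < n then (X (⟨i + 1, h⟩ : Fin n) : MvPolynomial (Fin n) ℤ) else 0)))
      ≠ 0 := by
  set t : Fin n →₀ ℕ :=
    Finsupp.equivFunOnFinite.symm fun i : Fin n => if (i : ℕ) < n - 1 then 1 else 0 with ht_def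
  have ht_apply : ∀ i : Fin n, t i = if (i : ℕ) < n - 1 then 1 else 0 := fun i => rfl
  have hprod : (∏ i ∈ Finset.range (n - 1),
      ((if h : i < n then (X (⟨i, h⟩ : Fin n) : MvPolynomial (Fin n) ℤ) else 0) +
       (if h : i + 1 < n then (X (⟨i + 1, h⟩ : Fin n) : MvPolynomial (Fin n) ℤ) else 0)))
      = ∏ i ∈ Finset.range (n - 1), F n i := rfl
  have hcong : Ideal.Quotient.mk (I n) (q n (n - 1))
      = Ideal.Quotient.mk (I n)
          (∏ i ∈ Finset.range (n - 1),
            ((if h : i < n then (X (⟨i, h⟩ : Fin n) : MvPolynomial (Fin n) ℤ) else 0) +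
             (if h : i + 1 < n then (X (⟨i + 1, h⟩ : Fin n) : MvPolynomial (Fin n) ℤ) else 0))) := by
    rw [hprod, prod_eq n (n - 1) (by omega)]
  have hcoefft : (q n (n - 1)).coeff t = 1 := by
    rw [coeff_q]
    have hcongr : ∀ k ∈ Finset.range (n - 1 + 1),
        (if D n (n - 1) k = t then (1 : ℤ) else 0) = if k = n - 1 then 1 else 0 := by
      intro k hk
      have hk' : k ≤ n - 1 := Nat.lt_succ_iff.1 (Finset.mem_range.1 hk)
      congr 1
      simp only [eq_iff_iff]
      constructor
      · intro hDt
        by_contra hne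
        have hkn : k < n := by omega
        have h1 : D n (n - 1) k ⟨k, hkn⟩ = t ⟨k, hkn⟩ := by rw [hDt]
        simp only [D_apply, ht_apply] at h1
        split_ifs at h1 <;> omega
      · intro hk
        subst hk
        ext i
        rw [D_apply, ht_apply]
        have := i.isLt
        split_ifs <;> omega
    rw [Finset.sum_congr rfl hcongr, Finset.sum_ite_eq' (Finset.range (n - 1 + 1)) (n - 1)]
    simp
  refine ⟨⟨q n (n - 1), ?_, ?_, hcoefft, hcong⟩, ?_⟩
  · intro m hm i
    have h := MvPolynomial.mem_support_iff.1 hm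
    rw [coeff_q] at h
    obtain ⟨k, hk, hne⟩ := Finset.exists_ne_zero_of_sum_ne_zero h
    have hDm : D n (n - 1) k = m := by
      by_contra hc
      simp [hc] at hne
    rw [← hDm, D_apply]
    split_ifs <;> omega
  · intro m
    rw [coeff_q]
    refine Finset.sum_nonneg fun k _ => ?_
    split_ifs <;> simp
  · intro h0
    have h0' : Ideal.Quotient.mk (I n)
        (∏ i ∈ Finset.range (n - 1),
          ((if h : i < n then (X (⟨i, h⟩ : Fin n) : MvPolynomial (Fin n) ℤ) else 0) +
           (if h : i + 1 < n then (X (⟨i + 1, h⟩ : Fin n) : MvPolynomial (Fin n) ℤ) else 0)))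
        = 0 := h0
    rw [← hcong] at h0'
    have hmem : q n (n - 1) ∈ I n := Ideal.Quotient.eq_zero_iff_mem.1 h0'
    have := coeff_eq_zero_of_mem hmem t (fun i => by rw [ht_apply]; split_ifs <;> omega)
    rw [hcoefft] at this
    exact one_ne_zero this
end
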